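/- Let Z : B → ℝ⁴ be a C¹ conformally parametrized immersion with area element W_Z (so |Z_u|² = |Z_v|² = W_Z > 0, Z_u·Z_v = 0), let α ∈ (0,1), c_6 > 0, C_1 > 0, and suppose W_Z(w) ≥ C_1 for all w ∈ B_{1/2}(0,0) and |Z_{u^i}(w_1) − Z_{u^i}(w_2)| ≤ c_6 |w_1 − w_2|^α for i = 1,2 and all w_1, w_2 ∈ B_{1/4}(0,0). Let N̄_1, N̄_2 ∈ ℝ⁴ be orthonormal vectors that are both orthogonal to Z_u(0,0) and Z_v(0,0). Then there exist ν_2 > 0 and c_9 > 0 depending only on c_6, C_1 and α, and maps N_1, N_2 : B_{ν_2}(0,0) → ℝ⁴ such that at every w ∈ B_{ν_2}(0,0): |N_1(w)| = |N_2(w)| = 1, N_1(w)·N_2(w) = 0, N_k(w)·Z_u(w) = N_k(w)·Z_v(w) = 0 for k = 1,2, and |N_k(w_1) − N_k(w_2)| ≤ c_9 |w_1 − w_2|^α for k = 1,2 and all w_1, w_2 ∈ B_{ν_2}(0,0). -/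

import Mathlib

open scoped RealInnerProductSpace
open Metric Real

noncomputable section

abbrev E2 : Type := EuclideanSpace ℝ (Fin 2)
abbrev E4 : Type := EuclideanSpace ℝ (Fin 4)

/-- Partial derivative of a map `Z : ℝ² → ℝ⁴` in the `i`-th coordinate direction. -/
def pd (Z : E2 → E4) (i : Fin 2) (w : E2) : E4 :=
  fderiv ℝ Z w (EuclideanSpace.single i 1)

set_option maxHeartbeats 1000000

section aux
variable {F : Type*} [NormedAddCommGroup F] [InnerProductSpace ℝ F]

lemma aux_normalize (m : ℝ) (hm : 0 < m) (x y : F) (hx : m ≤ ‖x‖) (hy : m ≤ ‖y‖) :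
    ‖‖x‖⁻¹ • x - ‖y‖⁻¹ • y‖ ≤ 2 / m * ‖x - y‖ := by
  have hx0 : (0:ℝ) < ‖x‖ := lt_of_lt_of_le hm hx
  have hy0 : (0:ℝ) < ‖y‖ := lt_of_lt_of_le hm hy
  have hid : ‖x‖⁻¹ • x - ‖y‖⁻¹ • y = ‖x‖⁻¹ • (x - y) + (‖x‖⁻¹ - ‖y‖⁻¹) • y := by
    rw [smul_sub, sub_smul]; abel
  rw [hid]
  have habs : |‖y‖ - ‖x‖| ≤ ‖x - y‖ := by
    rw [abs_sub_comm]; exact abs_norm_sub_norm_le x y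
  have h1 : ‖(‖x‖⁻¹ : ℝ) • (x - y)‖ = ‖x‖⁻¹ * ‖x - y‖ := by
    rw [norm_smul, Real.norm_eq_abs, abs_of_pos (by positivity)]
  have h1' : ‖x‖⁻¹ * ‖x - y‖ ≤ 1 / m * ‖x - y‖ := by
    have hinv : ‖x‖⁻¹ ≤ 1 / m := by rw [one_div]; exact inv_anti₀ hm hx
    exact mul_le_mul_of_nonneg_right hinv (norm_nonneg _)
  have h2 : ‖(‖x‖⁻¹ - ‖y‖⁻¹ : ℝ) • y‖ ≤ 1 / m * ‖x - y‖ := by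
    rw [norm_smul, Real.norm_eq_abs]
    have heq : ‖x‖⁻¹ - ‖y‖⁻¹ = (‖y‖ - ‖x‖) / (‖x‖ * ‖y‖) := by field_simp
    rw [heq, abs_div, abs_of_pos (by positivity : (0:ℝ) < ‖x‖ * ‖y‖)]
    rw [div_mul_eq_mul_div, div_le_iff₀ (by positivity)]
    have h3 : |‖y‖ - ‖x‖| * ‖y‖ ≤ ‖x - y‖ * ‖y‖ := by gcongr
    have h4 : m * ‖y‖ ≤ ‖x‖ * ‖y‖ := by gcongr
    calc |‖y‖ - ‖x‖| * ‖y‖ ≤ ‖x - y‖ * ‖y‖ := h3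
      _ = 1 / m * ‖x - y‖ * (m * ‖y‖) := by field_simp
      _ ≤ 1 / m * ‖x - y‖ * (‖x‖ * ‖y‖) := by
          exact mul_le_mul_of_nonneg_left h4 (by positivity)
  calc ‖(‖x‖⁻¹:ℝ) • (x - y) + (‖x‖⁻¹ - ‖y‖⁻¹ : ℝ) • y‖
      ≤ ‖(‖x‖⁻¹:ℝ) • (x - y)‖ + ‖(‖x‖⁻¹ - ‖y‖⁻¹:ℝ) • y‖ := norm_add_le _ _
    _ ≤ 1 / m * ‖x - y‖ + 1 / m * ‖x - y‖ := add_le_add (h1 ▸ h1') h2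
    _ = 2 / m * ‖x - y‖ := by ring

lemma aux_proj (Nb a b : F) (hNb : ‖Nb‖ ≤ 1) (ha : ‖a‖ ≤ 1) (hbb : ‖b‖ ≤ 1) :
    ‖⟪Nb, a⟫ • a - ⟪Nb, b⟫ • b‖ ≤ 2 * ‖a - b‖ := by
  have hid : ⟪Nb, a⟫ • a - ⟪Nb, b⟫ • b = ⟪Nb, a - b⟫ • a + ⟪Nb, b⟫ • (a - b) := by
    rw [inner_sub_right, sub_smul, smul_sub]; abel
  rw [hid]
  have e1 : ‖⟪Nb, a - b⟫ • a‖ ≤ ‖a - b‖ := by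
    rw [norm_smul, Real.norm_eq_abs]
    calc |⟪Nb, a - b⟫| * ‖a‖ ≤ (‖Nb‖ * ‖a - b‖) * 1 := by
          gcongr
          exact abs_real_inner_le_norm _ _
      _ ≤ 1 * ‖a - b‖ * 1 := by gcongr
      _ = ‖a - b‖ := by ring
  have e2 : ‖⟪Nb, b⟫ • (a - b)‖ ≤ ‖a - b‖ := by
    rw [norm_smul, Real.norm_eq_abs]
    calc |⟪Nb, b⟫| * ‖a - b‖ ≤ (‖Nb‖ * ‖b‖) * ‖a - b‖ := by
          gcongr
          exact abs_real_inner_le_norm _ _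
      _ ≤ (1 * 1) * ‖a - b‖ := by gcongr
      _ = ‖a - b‖ := by ring
  calc ‖⟪Nb, a - b⟫ • a + ⟪Nb, b⟫ • (a - b)‖
      ≤ ‖⟪Nb, a - b⟫ • a‖ + ‖⟪Nb, b⟫ • (a - b)‖ := norm_add_le _ _
    _ ≤ ‖a - b‖ + ‖a - b‖ := add_le_add e1 e2
    _ = 2 * ‖a - b‖ := by ring
end aux

/-- **Construction of a Hölder continuous orthonormal normal frame.** Near the origin
one can construct an orthonormal basis `N₁, N₂` of the normal space of `Z`, defined on a
ball `B_{ν₂}(0)` and Hölder continuous with constant `c₉`, where `ν₂` and `c₉` depend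
only on `c₆`, `C₁` and `α`. -/
theorem hoelder_orthonormal_normal_frame
    (α : ℝ) (hα : α ∈ Set.Ioo (0 : ℝ) 1)
    (c₆ : ℝ) (hc₆ : 0 < c₆)
    (C₁ : ℝ) (hC₁ : 0 < C₁) :
    ∃ ν₂ : ℝ, 0 < ν₂ ∧ ∃ c₉ : ℝ, 0 < c₉ ∧
      ∀ (Z : E2 → E4) (WZ : E2 → ℝ),
        ContDiffOn ℝ 1 Z (ball (0 : E2) 1) →
        (∀ w ∈ ball (0 : E2) 1,
          ⟪pd Z 0 w, pd Z 0 w⟫ = WZ w ∧ ⟪pd Z 1 w, pd Z 1 w⟫ = WZ w ∧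
          ⟪pd Z 0 w, pd Z 1 w⟫ = 0 ∧ 0 < WZ w) →
        (∀ w ∈ ball (0 : E2) (1 / 2), C₁ ≤ WZ w) →
        (∀ i : Fin 2, ∀ w₁ ∈ ball (0 : E2) (1 / 4), ∀ w₂ ∈ ball (0 : E2) (1 / 4),
          ‖pd Z i w₁ - pd Z i w₂‖ ≤ c₆ * dist w₁ w₂ ^ α) →
        ∀ Nb₁ Nb₂ : E4,
          ‖Nb₁‖ = 1 → ‖Nb₂‖ = 1 → ⟪Nb₁, Nb₂⟫ = 0 →
          ⟪Nb₁, pd Z 0 0⟫ = 0 → ⟪Nb₁, pd Z 1 0⟫ = 0 →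
          ⟪Nb₂, pd Z 0 0⟫ = 0 → ⟪Nb₂, pd Z 1 0⟫ = 0 →
          ∃ N₁ N₂ : E2 → E4,
            (∀ w ∈ ball (0 : E2) ν₂,
              ‖N₁ w‖ = 1 ∧ ‖N₂ w‖ = 1 ∧ ⟪N₁ w, N₂ w⟫ = 0 ∧
              ⟪N₁ w, pd Z 0 w⟫ = 0 ∧ ⟪N₁ w, pd Z 1 w⟫ = 0 ∧
              ⟪N₂ w, pd Z 0 w⟫ = 0 ∧ ⟪N₂ w, pd Z 1 w⟫ = 0) ∧
            ∀ w₁ ∈ ball (0 : E2) ν₂, ∀ w₂ ∈ ball (0 : E2) ν₂,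
              ‖N₁ w₁ - N₁ w₂‖ ≤ c₉ * dist w₁ w₂ ^ α ∧
              ‖N₂ w₁ - N₂ w₂‖ ≤ c₉ * dist w₁ w₂ ^ α := by
  have hsq : 0 < Real.sqrt C₁ := Real.sqrt_pos.2 hC₁
  set L : ℝ := 2 * c₆ / Real.sqrt C₁ with hLdef
  have hLpos : 0 < L := by positivity
  set ν : ℝ := min (1/8) ((1/(20*L)) ^ (1/α)) with hνdef
  have hνpos : 0 < ν := lt_min (by norm_num) (Real.rpow_pos_of_pos (by positivity) _)
  have hν8 : ν ≤ 1/8 := min_le_left _ _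
  have hνα : ν ^ α ≤ 1/(20*L) := by
    calc ν ^ α ≤ ((1/(20*L)) ^ (1/α)) ^ α :=
          Real.rpow_le_rpow hνpos.le (min_le_right _ _) hα.1.le
      _ = 1/(20*L) := by
          rw [← Real.rpow_mul (by positivity), one_div_mul_cancel (ne_of_gt hα.1),
            Real.rpow_one]
  refine ⟨ν, hνpos, 100 * L, by positivity, ?_⟩
  intro Z WZ hZ hconf hWlow hHol Nb₁ Nb₂ hNb₁ hNb₂ hNb₁₂ h10 h11 h20 h21
  have hball4 : ∀ w ∈ ball (0:E2) ν, w ∈ ball (0:E2) (1/4) := fun w hw =>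
    ball_subset_ball (le_trans hν8 (by norm_num)) hw
  have hball2 : ∀ w ∈ ball (0:E2) ν, w ∈ ball (0:E2) (1/2) := fun w hw =>
    ball_subset_ball (le_trans hν8 (by norm_num)) hw
  have hb12 : ball (0:E2) (1/2) ⊆ ball (0:E2) 1 := ball_subset_ball (by norm_num)
  -- norms of the tangent vectors
  have hpdsq : ∀ (i : Fin 2), ∀ w ∈ ball (0:E2) 1, ‖pd Z i w‖ ^ 2 = WZ w := by
    intro i w hw
    have hc := hconf w hw
    have hself : ⟪pd Z i w, pd Z i w⟫ = WZ w := by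
      fin_cases i
      · exact hc.1
      · exact hc.2.1
    rw [← real_inner_self_eq_norm_sq]
    exact hself
  have hpdn : ∀ (i : Fin 2), ∀ w ∈ ball (0:E2) (1/2), Real.sqrt C₁ ≤ ‖pd Z i w‖ := by
    intro i w hw
    have h1 : C₁ ≤ ‖pd Z i w‖ ^ 2 := by rw [hpdsq i w (hb12 hw)]; exact hWlow w hw
    have h2 : Real.sqrt C₁ ≤ Real.sqrt (‖pd Z i w‖ ^ 2) := Real.sqrt_le_sqrt h1
    rwa [Real.sqrt_sq (norm_nonneg _)] at h2
  have hpdne : ∀ (i : Fin 2), ∀ w ∈ ball (0:E2) (1/2), pd Z i w ≠ 0 := by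
    intro i w hw
    intro h
    have := hpdn i w hw
    rw [h, norm_zero] at this
    linarith
  set e : Fin 2 → E2 → E4 := fun i w => ‖pd Z i w‖⁻¹ • pd Z i w with hedef
  have henorm : ∀ (i : Fin 2), ∀ w ∈ ball (0:E2) (1/2), ‖e i w‖ = 1 := by
    intro i w hw
    exact norm_smul_inv_norm (hpdne i w hw)
  have hpdeq : ∀ (i : Fin 2), ∀ w ∈ ball (0:E2) (1/2), pd Z i w = ‖pd Z i w‖ • e i w := by
    intro i w hw
    rw [hedef]
    rw [smul_inv_smul₀ (norm_ne_zero_iff.2 (hpdne i w hw))]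
  have hee : ∀ w ∈ ball (0:E2) (1/2),
      ⟪e 0 w, e 0 w⟫ = 1 ∧ ⟪e 1 w, e 1 w⟫ = 1 ∧ ⟪e 0 w, e 1 w⟫ = 0 ∧ ⟪e 1 w, e 0 w⟫ = 0 := by
    intro w hw
    have hc := hconf w (hb12 hw)
    have hself : ∀ i : Fin 2, ⟪e i w, e i w⟫ = 1 := by
      intro i
      have h := real_inner_self_eq_norm_sq (e i w)
      rw [henorm i w hw] at h
      rw [h]; norm_num
    have hcross : ⟪e 0 w, e 1 w⟫ = 0 := by
      simp only [hedef, real_inner_smul_left, real_inner_smul_right]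
      rw [hc.2.2.1]; ring
    exact ⟨hself 0, hself 1, hcross, by rw [real_inner_comm]; exact hcross⟩
  have hHolE : ∀ (i : Fin 2), ∀ w₁ ∈ ball (0:E2) ν, ∀ w₂ ∈ ball (0:E2) ν,
      ‖e i w₁ - e i w₂‖ ≤ L * dist w₁ w₂ ^ α := by
    intro i w₁ h₁ w₂ h₂
    calc ‖e i w₁ - e i w₂‖
        ≤ 2 / Real.sqrt C₁ * ‖pd Z i w₁ - pd Z i w₂‖ :=
          aux_normalize _ hsq _ _ (hpdn i w₁ (hball2 _ h₁)) (hpdn i w₂ (hball2 _ h₂))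
      _ ≤ 2 / Real.sqrt C₁ * (c₆ * dist w₁ w₂ ^ α) := by
          exact mul_le_mul_of_nonneg_left
            (hHol i w₁ (hball4 _ h₁) w₂ (hball4 _ h₂)) (by positivity)
      _ = L * dist w₁ w₂ ^ α := by rw [hLdef]; ring
  have h0mem : (0:E2) ∈ ball (0:E2) ν := mem_ball_self hνpos
  have hdista : ∀ w₁ ∈ ball (0:E2) ν, ∀ w₂ ∈ ball (0:E2) ν,
      (0:ℝ) ≤ dist w₁ w₂ ^ α := fun _ _ _ _ => Real.rpow_nonneg dist_nonneg _
  have hsmall : ∀ Nb : E4, ‖Nb‖ = 1 → ⟪Nb, pd Z 0 0⟫ = 0 → ⟪Nb, pd Z 1 0⟫ = 0 →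
      ∀ (i : Fin 2), ∀ w ∈ ball (0:E2) ν, |⟪Nb, e i w⟫| ≤ 1/20 := by
    intro Nb hNbn hh0 hh1 i w hw
    have hNbpd : ⟪Nb, pd Z i 0⟫ = 0 := by
      fin_cases i
      · exact hh0
      · exact hh1
    have he0 : ⟪Nb, e i 0⟫ = 0 := by
      simp only [hedef, real_inner_smul_right]
      rw [hNbpd, mul_zero]
    have hrw : ⟪Nb, e i w⟫ = ⟪Nb, e i w - e i 0⟫ := by
      rw [inner_sub_right, he0, sub_zero]
    rw [hrw]
    calc |⟪Nb, e i w - e i 0⟫| ≤ ‖Nb‖ * ‖e i w - e i 0‖ := abs_real_inner_le_norm _ _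
      _ = ‖e i w - e i 0‖ := by rw [hNbn, one_mul]
      _ ≤ L * dist w 0 ^ α := hHolE i w hw 0 h0mem
      _ ≤ L * ν ^ α := by
          exact mul_le_mul_of_nonneg_left
            (Real.rpow_le_rpow dist_nonneg (mem_ball.1 hw).le hα.1.le) hLpos.le
      _ ≤ L * (1/(20*L)) := mul_le_mul_of_nonneg_left hνα hLpos.le
      _ = 1/20 := by field_simp
  set M : E4 → E2 → E4 :=
    fun Nb w => Nb - ⟪Nb, e 0 w⟫ • e 0 w - ⟪Nb, e 1 w⟫ • e 1 w with hMdef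
  -- closeness of M Nb to Nb
  have hMclose : ∀ Nb : E4, ‖Nb‖ = 1 → ⟪Nb, pd Z 0 0⟫ = 0 → ⟪Nb, pd Z 1 0⟫ = 0 →
      ∀ w ∈ ball (0:E2) ν, ‖M Nb w - Nb‖ ≤ 1/10 := by
    intro Nb hNbn hh0 hh1 w hw
    have hid : M Nb w - Nb = -(⟪Nb, e 0 w⟫ • e 0 w) - ⟪Nb, e 1 w⟫ • e 1 w := by
      simp only [hMdef]; abel
    rw [hid]
    have h0 : ‖⟪Nb, e 0 w⟫ • e 0 w‖ ≤ 1/20 := by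
      rw [norm_smul, Real.norm_eq_abs, henorm 0 w (hball2 _ hw), mul_one]
      exact hsmall Nb hNbn hh0 hh1 0 w hw
    have h1 : ‖⟪Nb, e 1 w⟫ • e 1 w‖ ≤ 1/20 := by
      rw [norm_smul, Real.norm_eq_abs, henorm 1 w (hball2 _ hw), mul_one]
      exact hsmall Nb hNbn hh0 hh1 1 w hw
    calc ‖-(⟪Nb, e 0 w⟫ • e 0 w) - ⟪Nb, e 1 w⟫ • e 1 w‖
        ≤ ‖-(⟪Nb, e 0 w⟫ • e 0 w)‖ + ‖⟪Nb, e 1 w⟫ • e 1 w‖ := norm_sub_le _ _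
      _ = ‖⟪Nb, e 0 w⟫ • e 0 w‖ + ‖⟪Nb, e 1 w⟫ • e 1 w‖ := by rw [norm_neg]
      _ ≤ 1/20 + 1/20 := add_le_add h0 h1
      _ = 1/10 := by norm_num
  have hMbounds : ∀ Nb : E4, ‖Nb‖ = 1 → ⟪Nb, pd Z 0 0⟫ = 0 → ⟪Nb, pd Z 1 0⟫ = 0 →
      ∀ w ∈ ball (0:E2) ν, 9/10 ≤ ‖M Nb w‖ ∧ ‖M Nb w‖ ≤ 11/10 := by
    intro Nb hNbn hh0 hh1 w hw
    have hc := hMclose Nb hNbn hh0 hh1 w hw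
    have habs : |‖M Nb w‖ - ‖Nb‖| ≤ ‖M Nb w - Nb‖ := abs_norm_sub_norm_le _ _
    rw [hNbn] at habs
    rw [abs_le] at habs
    constructor <;> linarith [habs.1, habs.2]
  have hMHol : ∀ Nb : E4, ‖Nb‖ = 1 →
      ∀ w₁ ∈ ball (0:E2) ν, ∀ w₂ ∈ ball (0:E2) ν,
      ‖M Nb w₁ - M Nb w₂‖ ≤ 4*L * dist w₁ w₂ ^ α := by
    intro Nb hNbn w₁ h₁ w₂ h₂
    have hid : M Nb w₁ - M Nb w₂ =
        -(⟪Nb, e 0 w₁⟫ • e 0 w₁ - ⟪Nb, e 0 w₂⟫ • e 0 w₂)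
          - (⟪Nb, e 1 w₁⟫ • e 1 w₁ - ⟪Nb, e 1 w₂⟫ • e 1 w₂) := by
      simp only [hMdef]; abel
    rw [hid]
    have hp0 : ‖⟪Nb, e 0 w₁⟫ • e 0 w₁ - ⟪Nb, e 0 w₂⟫ • e 0 w₂‖ ≤ 2 * ‖e 0 w₁ - e 0 w₂‖ :=
      aux_proj Nb _ _ hNbn.le (henorm 0 w₁ (hball2 _ h₁)).le (henorm 0 w₂ (hball2 _ h₂)).le
    have hp1 : ‖⟪Nb, e 1 w₁⟫ • e 1 w₁ - ⟪Nb, e 1 w₂⟫ • e 1 w₂‖ ≤ 2 * ‖e 1 w₁ - e 1 w₂‖ :=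
      aux_proj Nb _ _ hNbn.le (henorm 1 w₁ (hball2 _ h₁)).le (henorm 1 w₂ (hball2 _ h₂)).le
    calc ‖-(⟪Nb, e 0 w₁⟫ • e 0 w₁ - ⟪Nb, e 0 w₂⟫ • e 0 w₂)
          - (⟪Nb, e 1 w₁⟫ • e 1 w₁ - ⟪Nb, e 1 w₂⟫ • e 1 w₂)‖
        ≤ ‖-(⟪Nb, e 0 w₁⟫ • e 0 w₁ - ⟪Nb, e 0 w₂⟫ • e 0 w₂)‖
          + ‖⟪Nb, e 1 w₁⟫ • e 1 w₁ - ⟪Nb, e 1 w₂⟫ • e 1 w₂‖ := norm_sub_le _ _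
      _ = ‖⟪Nb, e 0 w₁⟫ • e 0 w₁ - ⟪Nb, e 0 w₂⟫ • e 0 w₂‖
          + ‖⟪Nb, e 1 w₁⟫ • e 1 w₁ - ⟪Nb, e 1 w₂⟫ • e 1 w₂‖ := by rw [norm_neg]
      _ ≤ 2 * ‖e 0 w₁ - e 0 w₂‖ + 2 * ‖e 1 w₁ - e 1 w₂‖ := add_le_add hp0 hp1
      _ ≤ 2 * (L * dist w₁ w₂ ^ α) + 2 * (L * dist w₁ w₂ ^ α) := by
          have := hHolE 0 w₁ h₁ w₂ h₂
          have := hHolE 1 w₁ h₁ w₂ h₂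
          gcongr <;> assumption
      _ = 4*L * dist w₁ w₂ ^ α := by ring
  have hMperp : ∀ Nb : E4, ∀ w ∈ ball (0:E2) (1/2),
      ⟪M Nb w, e 0 w⟫ = 0 ∧ ⟪M Nb w, e 1 w⟫ = 0 := by
    intro Nb w hw
    obtain ⟨h00, h11', h01, h10'⟩ := hee w hw
    constructor
    · simp only [hMdef, inner_sub_left, real_inner_smul_left]
      rw [h00, h10']; ring
    · simp only [hMdef, inner_sub_left, real_inner_smul_left]
      rw [h01, h11']; ring
  have hMperp_pd : ∀ Nb : E4, ∀ w ∈ ball (0:E2) (1/2), ∀ j : Fin 2,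
      ⟪M Nb w, pd Z j w⟫ = 0 := by
    intro Nb w hw j
    fin_cases j
    · show ⟪M Nb w, pd Z 0 w⟫ = 0
      rw [hpdeq 0 w hw, real_inner_smul_right, (hMperp Nb w hw).1, mul_zero]
    · show ⟪M Nb w, pd Z 1 w⟫ = 0
      rw [hpdeq 1 w hw, real_inner_smul_right, (hMperp Nb w hw).2, mul_zero]
  -- the frame
  set N₁ : E2 → E4 := fun w => ‖M Nb₁ w‖⁻¹ • M Nb₁ w with hN₁def
  set g : E2 → ℝ := fun w => ⟪M Nb₂ w, N₁ w⟫ with hgdef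
  set P : E2 → E4 := fun w => M Nb₂ w - g w • N₁ w with hPdef
  set N₂ : E2 → E4 := fun w => ‖P w‖⁻¹ • P w with hN₂def
  have hM₁b : ∀ w ∈ ball (0:E2) ν, 9/10 ≤ ‖M Nb₁ w‖ ∧ ‖M Nb₁ w‖ ≤ 11/10 :=
    fun w hw => hMbounds Nb₁ hNb₁ h10 h11 w hw
  have hM₂b : ∀ w ∈ ball (0:E2) ν, 9/10 ≤ ‖M Nb₂ w‖ ∧ ‖M Nb₂ w‖ ≤ 11/10 :=
    fun w hw => hMbounds Nb₂ hNb₂ h20 h21 w hw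
  have hM₁ne : ∀ w ∈ ball (0:E2) ν, M Nb₁ w ≠ 0 := by
    intro w hw h
    have := (hM₁b w hw).1
    rw [h, norm_zero] at this; linarith
  have hN₁n : ∀ w ∈ ball (0:E2) ν, ‖N₁ w‖ = 1 :=
    fun w hw => norm_smul_inv_norm (hM₁ne w hw)
  have hgb : ∀ w ∈ ball (0:E2) ν, |g w| ≤ 1/4 := by
    intro w hw
    have hNb₂₁ : ⟪Nb₂, Nb₁⟫ = 0 := by rw [real_inner_comm]; exact hNb₁₂
    have hc₁ := hMclose Nb₁ hNb₁ h10 h11 w hw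
    have hc₂ := hMclose Nb₂ hNb₂ h20 h21 w hw
    have key : ⟪M Nb₂ w, M Nb₁ w⟫ =
        ⟪Nb₂, M Nb₁ w - Nb₁⟫ + ⟪M Nb₂ w - Nb₂, Nb₁⟫
          + ⟪M Nb₂ w - Nb₂, M Nb₁ w - Nb₁⟫ := by
      simp only [inner_sub_left, inner_sub_right]
      rw [hNb₂₁]; ring
    have ht1 : |⟪Nb₂, M Nb₁ w - Nb₁⟫| ≤ 1/10 := by
      calc |⟪Nb₂, M Nb₁ w - Nb₁⟫| ≤ ‖Nb₂‖ * ‖M Nb₁ w - Nb₁‖ := abs_real_inner_le_norm _ _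
        _ ≤ 1 * (1/10) := by rw [hNb₂]; exact mul_le_mul_of_nonneg_left hc₁ one_pos.le
        _ = 1/10 := by norm_num
    have ht2 : |⟪M Nb₂ w - Nb₂, Nb₁⟫| ≤ 1/10 := by
      calc |⟪M Nb₂ w - Nb₂, Nb₁⟫| ≤ ‖M Nb₂ w - Nb₂‖ * ‖Nb₁‖ := abs_real_inner_le_norm _ _
        _ ≤ (1/10) * 1 := by rw [hNb₁]; exact mul_le_mul_of_nonneg_right hc₂ one_pos.le
        _ = 1/10 := by norm_num
    have ht3 : |⟪M Nb₂ w - Nb₂, M Nb₁ w - Nb₁⟫| ≤ 1/100 := by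
      calc |⟪M Nb₂ w - Nb₂, M Nb₁ w - Nb₁⟫| ≤ ‖M Nb₂ w - Nb₂‖ * ‖M Nb₁ w - Nb₁‖ :=
            abs_real_inner_le_norm _ _
        _ ≤ (1/10) * (1/10) := by
            exact mul_le_mul hc₂ hc₁ (norm_nonneg _) (by norm_num)
        _ = 1/100 := by norm_num
    have hMM : |⟪M Nb₂ w, M Nb₁ w⟫| ≤ 21/100 := by
      rw [key]
      calc |⟪Nb₂, M Nb₁ w - Nb₁⟫ + ⟪M Nb₂ w - Nb₂, Nb₁⟫ + ⟪M Nb₂ w - Nb₂, M Nb₁ w - Nb₁⟫|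
          ≤ |⟪Nb₂, M Nb₁ w - Nb₁⟫ + ⟪M Nb₂ w - Nb₂, Nb₁⟫|
            + |⟪M Nb₂ w - Nb₂, M Nb₁ w - Nb₁⟫| := abs_add_le _ _
        _ ≤ (|⟪Nb₂, M Nb₁ w - Nb₁⟫| + |⟪M Nb₂ w - Nb₂, Nb₁⟫|)
            + |⟪M Nb₂ w - Nb₂, M Nb₁ w - Nb₁⟫| := by
            exact add_le_add_left (abs_add_le _ _) _
        _ ≤ (1/10 + 1/10) + 1/100 := by
            exact add_le_add (add_le_add ht1 ht2) ht3
        _ = 21/100 := by norm_num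
    have hgeq : g w = ‖M Nb₁ w‖⁻¹ * ⟪M Nb₂ w, M Nb₁ w⟫ := by
      simp only [hgdef, hN₁def, real_inner_smul_right]
    rw [hgeq, abs_mul, abs_of_nonneg (inv_nonneg.2 (norm_nonneg _))]
    have hinv : ‖M Nb₁ w‖⁻¹ ≤ (9/10 : ℝ)⁻¹ :=
      inv_anti₀ (by norm_num) (hM₁b w hw).1
    calc ‖M Nb₁ w‖⁻¹ * |⟪M Nb₂ w, M Nb₁ w⟫| ≤ (9/10:ℝ)⁻¹ * (21/100) :=
          mul_le_mul hinv hMM (abs_nonneg _) (by norm_num)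
      _ ≤ 1/4 := by norm_num
  have hPlb : ∀ w ∈ ball (0:E2) ν, 1/2 ≤ ‖P w‖ := by
    intro w hw
    have h1 : ‖M Nb₂ w‖ - ‖g w • N₁ w‖ ≤ ‖P w‖ := by
      rw [hPdef]; exact norm_sub_norm_le _ _
    have h2 : ‖g w • N₁ w‖ ≤ 1/4 := by
      rw [norm_smul, Real.norm_eq_abs, hN₁n w hw, mul_one]
      exact hgb w hw
    have := (hM₂b w hw).1
    linarith
  have hPub : ∀ w ∈ ball (0:E2) ν, ‖P w‖ ≤ 2 := by
    intro w hw
    have h1 : ‖P w‖ ≤ ‖M Nb₂ w‖ + ‖g w • N₁ w‖ := by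
      rw [hPdef]; exact norm_sub_le _ _
    have h2 : ‖g w • N₁ w‖ ≤ 1/4 := by
      rw [norm_smul, Real.norm_eq_abs, hN₁n w hw, mul_one]
      exact hgb w hw
    have := (hM₂b w hw).2
    linarith
  have hPne : ∀ w ∈ ball (0:E2) ν, P w ≠ 0 := by
    intro w hw h
    have := hPlb w hw
    rw [h, norm_zero] at this; linarith
  have hN₂n : ∀ w ∈ ball (0:E2) ν, ‖N₂ w‖ = 1 :=
    fun w hw => norm_smul_inv_norm (hPne w hw)
  have hN₁pd : ∀ w ∈ ball (0:E2) ν, ∀ j : Fin 2, ⟪N₁ w, pd Z j w⟫ = 0 := by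
    intro w hw j
    have : ⟪N₁ w, pd Z j w⟫ = ‖M Nb₁ w‖⁻¹ * ⟪M Nb₁ w, pd Z j w⟫ := by
      simp only [hN₁def, real_inner_smul_left]
    rw [this, hMperp_pd Nb₁ w (hball2 _ hw) j, mul_zero]
  have hPpd : ∀ w ∈ ball (0:E2) ν, ∀ j : Fin 2, ⟪P w, pd Z j w⟫ = 0 := by
    intro w hw j
    have : ⟪P w, pd Z j w⟫ =
        ⟪M Nb₂ w, pd Z j w⟫ - g w * ⟪N₁ w, pd Z j w⟫ := by
      simp only [hPdef, inner_sub_left, real_inner_smul_left]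
    rw [this, hMperp_pd Nb₂ w (hball2 _ hw) j, hN₁pd w hw j, mul_zero, sub_zero]
  have hN₂pd : ∀ w ∈ ball (0:E2) ν, ∀ j : Fin 2, ⟪N₂ w, pd Z j w⟫ = 0 := by
    intro w hw j
    have : ⟪N₂ w, pd Z j w⟫ = ‖P w‖⁻¹ * ⟪P w, pd Z j w⟫ := by
      simp only [hN₂def, real_inner_smul_left]
    rw [this, hPpd w hw j, mul_zero]
  have hN₁N₂ : ∀ w ∈ ball (0:E2) ν, ⟪N₁ w, N₂ w⟫ = 0 := by
    intro w hw
    have hNN : ⟪N₁ w, N₁ w⟫ = 1 := by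
      have h := real_inner_self_eq_norm_sq (N₁ w)
      rw [hN₁n w hw] at h
      rw [h]; norm_num
    have h1 : ⟪N₁ w, N₂ w⟫ = ‖P w‖⁻¹ * ⟪N₁ w, P w⟫ := by
      simp only [hN₂def, real_inner_smul_right]
    have h2 : ⟪N₁ w, P w⟫ = ⟪N₁ w, M Nb₂ w⟫ - g w * ⟪N₁ w, N₁ w⟫ := by
      simp only [hPdef, inner_sub_right, real_inner_smul_right]
    have h3 : ⟪N₁ w, M Nb₂ w⟫ = g w := by
      rw [real_inner_comm]
    rw [h1, h2, h3, hNN, mul_one, sub_self, mul_zero]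
  -- Hölder estimates
  have hN₁Hol : ∀ w₁ ∈ ball (0:E2) ν, ∀ w₂ ∈ ball (0:E2) ν,
      ‖N₁ w₁ - N₁ w₂‖ ≤ 9*L * dist w₁ w₂ ^ α := by
    intro w₁ h₁ w₂ h₂
    calc ‖N₁ w₁ - N₁ w₂‖
        ≤ 2/(9/10) * ‖M Nb₁ w₁ - M Nb₁ w₂‖ :=
          aux_normalize _ (by norm_num) _ _ (hM₁b w₁ h₁).1 (hM₁b w₂ h₂).1
      _ ≤ 2/(9/10) * (4*L * dist w₁ w₂ ^ α) :=
          mul_le_mul_of_nonneg_left (hMHol Nb₁ hNb₁ w₁ h₁ w₂ h₂) (by norm_num)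
      _ ≤ 9*L * dist w₁ w₂ ^ α := by
          have := hdista w₁ h₁ w₂ h₂
          nlinarith [hLpos.le]
  have hgHol : ∀ w₁ ∈ ball (0:E2) ν, ∀ w₂ ∈ ball (0:E2) ν,
      |g w₁ - g w₂| ≤ 14*L * dist w₁ w₂ ^ α := by
    intro w₁ h₁ w₂ h₂
    have hid : g w₁ - g w₂ =
        ⟪M Nb₂ w₁ - M Nb₂ w₂, N₁ w₁⟫ + ⟪M Nb₂ w₂, N₁ w₁ - N₁ w₂⟫ := by
      simp only [hgdef, inner_sub_left, inner_sub_right]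
      ring
    rw [hid]
    have ht1 : |⟪M Nb₂ w₁ - M Nb₂ w₂, N₁ w₁⟫| ≤ 4*L * dist w₁ w₂ ^ α := by
      calc |⟪M Nb₂ w₁ - M Nb₂ w₂, N₁ w₁⟫| ≤ ‖M Nb₂ w₁ - M Nb₂ w₂‖ * ‖N₁ w₁‖ :=
            abs_real_inner_le_norm _ _
        _ = ‖M Nb₂ w₁ - M Nb₂ w₂‖ := by rw [hN₁n w₁ h₁, mul_one]
        _ ≤ 4*L * dist w₁ w₂ ^ α := hMHol Nb₂ hNb₂ w₁ h₁ w₂ h₂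
    have ht2 : |⟪M Nb₂ w₂, N₁ w₁ - N₁ w₂⟫| ≤ 10*L * dist w₁ w₂ ^ α := by
      calc |⟪M Nb₂ w₂, N₁ w₁ - N₁ w₂⟫| ≤ ‖M Nb₂ w₂‖ * ‖N₁ w₁ - N₁ w₂‖ :=
            abs_real_inner_le_norm _ _
        _ ≤ (11/10) * (9*L * dist w₁ w₂ ^ α) := by
            exact mul_le_mul (hM₂b w₂ h₂).2 (hN₁Hol w₁ h₁ w₂ h₂) (norm_nonneg _)
              (by norm_num)
        _ ≤ 10*L * dist w₁ w₂ ^ α := by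
            have := hdista w₁ h₁ w₂ h₂
            nlinarith [hLpos.le]
    calc |⟪M Nb₂ w₁ - M Nb₂ w₂, N₁ w₁⟫ + ⟪M Nb₂ w₂, N₁ w₁ - N₁ w₂⟫|
        ≤ |⟪M Nb₂ w₁ - M Nb₂ w₂, N₁ w₁⟫| + |⟪M Nb₂ w₂, N₁ w₁ - N₁ w₂⟫| := abs_add_le _ _
      _ ≤ 4*L * dist w₁ w₂ ^ α + 10*L * dist w₁ w₂ ^ α := add_le_add ht1 ht2
      _ = 14*L * dist w₁ w₂ ^ α := by ring
  have hPHol : ∀ w₁ ∈ ball (0:E2) ν, ∀ w₂ ∈ ball (0:E2) ν,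
      ‖P w₁ - P w₂‖ ≤ 21*L * dist w₁ w₂ ^ α := by
    intro w₁ h₁ w₂ h₂
    have hid : P w₁ - P w₂ = (M Nb₂ w₁ - M Nb₂ w₂)
        - ((g w₁ - g w₂) • N₁ w₁ + g w₂ • (N₁ w₁ - N₁ w₂)) := by
      simp only [hPdef, sub_smul, smul_sub]
      abel
    rw [hid]
    have ht1 : ‖(g w₁ - g w₂) • N₁ w₁‖ ≤ 14*L * dist w₁ w₂ ^ α := by
      rw [norm_smul, Real.norm_eq_abs, hN₁n w₁ h₁, mul_one]
      exact hgHol w₁ h₁ w₂ h₂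
    have ht2 : ‖g w₂ • (N₁ w₁ - N₁ w₂)‖ ≤ 3*L * dist w₁ w₂ ^ α := by
      rw [norm_smul, Real.norm_eq_abs]
      calc |g w₂| * ‖N₁ w₁ - N₁ w₂‖ ≤ (1/4) * (9*L * dist w₁ w₂ ^ α) :=
            mul_le_mul (hgb w₂ h₂) (hN₁Hol w₁ h₁ w₂ h₂) (norm_nonneg _) (by norm_num)
        _ ≤ 3*L * dist w₁ w₂ ^ α := by
            have := hdista w₁ h₁ w₂ h₂
            nlinarith [hLpos.le]
    calc ‖(M Nb₂ w₁ - M Nb₂ w₂) - ((g w₁ - g w₂) • N₁ w₁ + g w₂ • (N₁ w₁ - N₁ w₂))‖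
        ≤ ‖M Nb₂ w₁ - M Nb₂ w₂‖ + ‖(g w₁ - g w₂) • N₁ w₁ + g w₂ • (N₁ w₁ - N₁ w₂)‖ :=
          norm_sub_le _ _
      _ ≤ ‖M Nb₂ w₁ - M Nb₂ w₂‖
          + (‖(g w₁ - g w₂) • N₁ w₁‖ + ‖g w₂ • (N₁ w₁ - N₁ w₂)‖) := by
          exact add_le_add_right (norm_add_le _ _) _
      _ ≤ 4*L * dist w₁ w₂ ^ α + (14*L * dist w₁ w₂ ^ α + 3*L * dist w₁ w₂ ^ α) :=
          add_le_add (hMHol Nb₂ hNb₂ w₁ h₁ w₂ h₂) (add_le_add ht1 ht2)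
      _ = 21*L * dist w₁ w₂ ^ α := by ring
  have hN₂Hol : ∀ w₁ ∈ ball (0:E2) ν, ∀ w₂ ∈ ball (0:E2) ν,
      ‖N₂ w₁ - N₂ w₂‖ ≤ 84*L * dist w₁ w₂ ^ α := by
    intro w₁ h₁ w₂ h₂
    calc ‖N₂ w₁ - N₂ w₂‖
        ≤ 2/(1/2) * ‖P w₁ - P w₂‖ :=
          aux_normalize _ (by norm_num) _ _ (hPlb w₁ h₁) (hPlb w₂ h₂)
      _ ≤ 2/(1/2) * (21*L * dist w₁ w₂ ^ α) :=
          mul_le_mul_of_nonneg_left (hPHol w₁ h₁ w₂ h₂) (by norm_num)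
      _ = 84*L * dist w₁ w₂ ^ α := by ring
  refine ⟨N₁, N₂, ?_, ?_⟩
  · intro w hw
    exact ⟨hN₁n w hw, hN₂n w hw, hN₁N₂ w hw, hN₁pd w hw 0, hN₁pd w hw 1,
      hN₂pd w hw 0, hN₂pd w hw 1⟩
  · intro w₁ h₁ w₂ h₂
    have hd := hdista w₁ h₁ w₂ h₂
    constructor
    · calc ‖N₁ w₁ - N₁ w₂‖ ≤ 9*L * dist w₁ w₂ ^ α := hN₁Hol w₁ h₁ w₂ h₂
        _ ≤ 100*L * dist w₁ w₂ ^ α := by nlinarith [hLpos.le]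
    · calc ‖N₂ w₁ - N₂ w₂‖ ≤ 84*L * dist w₁ w₂ ^ α := hN₂Hol w₁ h₁ w₂ h₂
        _ ≤ 100*L * dist w₁ w₂ ^ α := by nlinarith [hLpos.le]
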